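/- Let G be a finite simple undirected graph on an even number of vertices. Then the number of perfect matchings of G is at most Π_{v ∈ V(G)} (deg(v)!)^{1/(2 deg(v))}, where if some vertex has degree 0 the number of perfect matchings is 0 (convention 0^{1/0} = 0). -/

import Mathlib

open SimpleGraph

namespace KL

open Finset Real

/-- `aF d = log d! / d`  (so `exp (aF d) = (d!)^(1/d)` for `d ≥ 1`). -/
noncomputable def aF (d : ℕ) : ℝ := Real.log (d.factorial) / d

lemma mul_aF {d : ℕ} (hd : d ≠ 0) : (d : ℝ) * aF d = Real.log d.factorial := by
  rw [aF, mul_div_cancel₀]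
  exact_mod_cast hd

/-- Exact identity `log d = aF d + (d-1) * (aF d - aF (d-1))` for `d ≥ 1`. -/
lemma aF_identity {d : ℕ} (hd : 1 ≤ d) :
    Real.log d = aF d + ((d : ℝ) - 1) * (aF d - aF (d - 1)) := by
  obtain ⟨m, rfl⟩ : ∃ m, d = m + 1 := ⟨d - 1, by omega⟩
  have h1 : ((m + 1 : ℕ) : ℝ) * aF (m + 1) = Real.log (m + 1).factorial :=
    mul_aF (by omega)
  rcases Nat.eq_zero_or_pos m with rfl | hm
  · simp [aF]
  · have h2 : (m : ℝ) * aF m = Real.log m.factorial := mul_aF (by omega)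
    have h3 : Real.log (m + 1).factorial
        = Real.log ((m : ℝ) + 1) + Real.log m.factorial := by
      rw [Nat.factorial_succ, Nat.cast_mul, Real.log_mul (by positivity)
        (by exact_mod_cast (Nat.factorial_pos m).ne')]
      push_cast
      ring
    have hsimp : (m + 1 : ℕ) - 1 = m := by omega
    rw [hsimp]
    push_cast at h1 ⊢
    nlinarith [h1, h2, h3]

/-- Stirling-type upper bound: `log m! ≤ 1 + (m + 1/2) log m - m` for `m ≥ 1`. -/
lemma log_factorial_le {m : ℕ} (hm : 1 ≤ m) :
    Real.log m.factorial ≤ 1 + ((m : ℝ) + 1 / 2) * Real.log m - m := by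
  obtain ⟨k, rfl⟩ : ∃ k, m = k + 1 := ⟨m - 1, by omega⟩
  have hanti := Stirling.log_stirlingSeq'_antitone (Nat.zero_le k)
  simp only [Function.comp_apply, Nat.succ_eq_add_one, Nat.zero_add] at hanti
  -- hanti : log (stirlingSeq (k+1)) ≤ log (stirlingSeq 1)
  have h1 : Real.log (Stirling.stirlingSeq 1) = 1 - 1 / 2 * Real.log 2 := by
    rw [Stirling.stirlingSeq_one, Real.log_div (by positivity) (by positivity),
      Real.log_exp, Real.log_sqrt (by norm_num)]
    ring
  have hform := Stirling.log_stirlingSeq_formula (k + 1)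
  set n : ℕ := k + 1
  have hn : (1 : ℝ) ≤ (n : ℝ) := by exact_mod_cast hm
  have hnpos : (0 : ℝ) < n := by linarith
  have h2 : Real.log ((2 : ℝ) * n) = Real.log 2 + Real.log n :=
    Real.log_mul (by norm_num) (by positivity)
  have h3 : Real.log ((n : ℝ) / Real.exp 1) = Real.log n - 1 :=
    by rw [Real.log_div (by positivity) (Real.exp_ne_zero 1), Real.log_exp]
  rw [hform, h2, h3, h1] at hanti
  ring_nf at hanti ⊢
  linarith

/-- Discrete concavity step: `aF (m+1) + aF (m-1) ≤ 2 aF m` for `m ≥ 2`. -/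
lemma aF_step {m : ℕ} (hm : 2 ≤ m) : aF (m + 1) + aF (m - 1) ≤ 2 * aF m := by
  obtain ⟨j, rfl⟩ : ∃ j, m = j + 1 := ⟨m - 1, by omega⟩
  have hj : 1 ≤ j := by omega
  set M : ℝ := (j : ℝ) + 1 with hM
  have hM2 : (2 : ℝ) ≤ M := by
    have : (1 : ℝ) ≤ (j : ℝ) := by exact_mod_cast hj
    simp [hM]; linarith
  set B : ℝ := Real.log (j + 1).factorial with hB
  set L : ℝ := Real.log M with hL
  set L' : ℝ := Real.log (M + 1) with hL'
  have hMpos : (0 : ℝ) < M := by linarith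
  -- aF values
  have ha1 : aF (j + 1) = B / M := by
    rw [aF]; push_cast; rfl
  have ha2 : aF (j + 1 + 1) = (B + L') / (M + 1) := by
    rw [aF, Nat.factorial_succ, Nat.cast_mul,
      Real.log_mul (by positivity) (by exact_mod_cast (Nat.factorial_pos _).ne')]
    push_cast
    rw [hB, hL', hM]
    ring_nf
  have ha3 : aF (j + 1 - 1) = (B - L) / (M - 1) := by
    have : (j + 1).factorial = (j + 1) * j.factorial := Nat.factorial_succ j
    have hBL : Real.log j.factorial = B - L := by
      rw [hB, this, Nat.cast_mul,
        Real.log_mul (by positivity) (by exact_mod_cast (Nat.factorial_pos _).ne')]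
      have : Real.log ((j:ℝ) + 1) = L := by rw [hL, hM]
      push_cast
      rw [this]; ring
    simp only [Nat.add_sub_cancel, aF, hBL]
    congr 1
    rw [hM]; push_cast; ring
  -- key facts
  have key1 : M * L' ≤ M * L + 1 := by
    have h := Real.log_le_sub_one_of_pos (x := (M + 1) / M) (by positivity)
    rw [Real.log_div (by positivity) (by positivity)] at h
    have h' : (M + 1) / M - 1 = 1 / M := by field_simp; ring
    rw [h'] at h
    have h2 : M * (Real.log (M + 1) - Real.log M) ≤ M * (1 / M) :=
      mul_le_mul_of_nonneg_left h hMpos.le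
    have h3 : M * (1 / M) = 1 := by field_simp
    rw [h3] at h2
    rw [hL', hL]; nlinarith [h2]
  have key2 : B ≤ 1 + (M + 1 / 2) * L - M := by
    have := log_factorial_le (m := j + 1) (by omega)
    rw [hB, hL, hM]; push_cast at this ⊢; convert this using 3 <;> push_cast <;> ring
  have key3 : L ≤ M - 1 := by
    have := Real.log_le_sub_one_of_pos hMpos
    rw [hL]; linarith
  have hmain : 2 * B ≤ M * (M + 1) * L - M * (M - 1) * L' := by
    have e1 : M * M * L' - M * L' ≤ M * M * L - M * L + M - 1 := by
      nlinarith [mul_le_mul_of_nonneg_left key1 (show (0:ℝ) ≤ M - 1 by linarith)]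
    nlinarith [e1, key2, key3]
  rw [ha1, ha2, ha3]
  rw [show 2 * (B / M) = (2 * B) / M by ring]
  rw [div_add_div _ _ (by positivity) (by nlinarith : M - 1 ≠ 0),
    div_le_div_iff₀ (by nlinarith) hMpos]
  nlinarith [hmain]

/-- Tangent-line bound at `d`: `aF d' ≤ aF d - (d - d') * (aF d - aF (d-1))`
for `1 ≤ d' ≤ d ≤ d' + 2`. -/
lemma aF_tangent {d' d : ℕ} (h1 : 1 ≤ d') (h2 : d' ≤ d) (h3 : d ≤ d' + 2) :
    aF d' ≤ aF d - ((d : ℝ) - (d' : ℝ)) * (aF d - aF (d - 1)) := by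
  have hcases : d = d' ∨ d = d' + 1 ∨ d = d' + 2 := by omega
  rcases hcases with rfl | rfl | rfl
  · simp
  · have : d' + 1 - 1 = d' := by omega
    rw [this]; push_cast; ring_nf; rfl
  · have h4 : d' + 2 - 1 = d' + 1 := by omega
    have hstep := aF_step (m := d' + 1) (by omega)
    have h5 : d' + 1 - 1 = d' := by omega
    rw [h5] at hstep
    rw [h4]; push_cast
    nlinarith [hstep]

/-- Jensen for `x log x`:
`T log T ≤ T log r + ∑ t_i log t_i` where `T = ∑ t_i`, `r = #s`. -/
lemma jensen {ι : Type*} (s : Finset ι) (t : ι → ℕ) :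
    ((∑ i ∈ s, t i : ℕ) : ℝ) * Real.log ((∑ i ∈ s, t i : ℕ) : ℝ) ≤
      ((∑ i ∈ s, t i : ℕ) : ℝ) * Real.log (s.card : ℝ)
        + ∑ i ∈ s, ((t i : ℝ) * Real.log (t i)) := by
  set T : ℕ := ∑ i ∈ s, t i with hT
  rcases Nat.eq_zero_or_pos T with hT0 | hTpos
  · have hsum0 : ∑ i ∈ s, t i = 0 := hT0
    have hall : ∀ i ∈ s, t i = 0 := Finset.sum_eq_zero_iff.mp hsum0
    rw [hT0]
    simp only [Nat.cast_zero, Real.log_zero, mul_zero, zero_mul, zero_add]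
    rw [Finset.sum_congr rfl (fun i hi => by rw [hall i hi])]
    simp
  · have hs : s.Nonempty := by
      by_contra h
      rw [Finset.not_nonempty_iff_eq_empty] at h
      simp [h] at hT
      omega
    have hr : (0 : ℝ) < s.card := by exact_mod_cast Finset.card_pos.mpr hs
    have hjensen := convexOn_mul_log.map_sum_le (t := s)
      (w := fun _ => (s.card : ℝ)⁻¹) (p := fun i => (t i : ℝ))
      (fun i _ => by positivity)
      (by rw [Finset.sum_const, nsmul_eq_mul, mul_inv_cancel₀ hr.ne'])
      (fun i _ => by simp [Set.mem_Ici])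
    simp only [smul_eq_mul] at hjensen
    have hsum : ∑ i ∈ s, (s.card : ℝ)⁻¹ * (t i : ℝ) = (T : ℝ) / s.card := by
      rw [← Finset.mul_sum, hT]
      push_cast
      ring
    rw [hsum] at hjensen
    have hTpos' : (0 : ℝ) < T := by exact_mod_cast hTpos
    have hlog : Real.log ((T : ℝ) / s.card) = Real.log T - Real.log s.card :=
      Real.log_div (by positivity) (by positivity)
    have h2 : ∑ i ∈ s, (s.card : ℝ)⁻¹ * ((t i : ℝ) * Real.log (t i))
        = (s.card : ℝ)⁻¹ * ∑ i ∈ s, ((t i : ℝ) * Real.log (t i)) := by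
      rw [Finset.mul_sum]
    rw [h2, hlog] at hjensen
    have h5 : (T : ℝ) * (Real.log T - Real.log (s.card : ℝ))
        ≤ ∑ i ∈ s, ((t i : ℝ) * Real.log (t i)) := by
      rw [div_mul_eq_mul_div, div_le_iff₀ hr] at hjensen
      calc (T : ℝ) * (Real.log T - Real.log (s.card : ℝ))
          ≤ (s.card : ℝ)⁻¹ * (∑ i ∈ s, ((t i : ℝ) * Real.log (t i))) * s.card :=
            hjensen
        _ = ∑ i ∈ s, ((t i : ℝ) * Real.log (t i)) := by field_simp
    nlinarith [h5]




variable {V : Type*} [Fintype V] [DecidableEq V]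

section Defs

variable (G : SimpleGraph V) [DecidableRel G.Adj]

/-- The predicate on `f : V → V` of being (the partner function of) a perfect
matching of `G`. -/
def pmPred (f : V → V) : Prop := (∀ x, f (f x) = x) ∧ ∀ v, G.Adj v (f v)

instance : DecidablePred (pmPred G) := fun _ => by unfold pmPred; infer_instance

/-- The finset of perfect matchings of `G`, as partner functions. -/
def PMs : Finset (V → V) := Finset.univ.filter (pmPred G)

lemma mem_PMs {f : V → V} : f ∈ PMs G ↔ (∀ x, f (f x) = x) ∧ ∀ v, G.Adj v (f v) := by
  simp [PMs, pmPred]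

lemma degree_pos_of_PMs_nonempty (h : (PMs G).Nonempty) (v : V) :
    1 ≤ G.degree v := by
  obtain ⟨f, hf⟩ := h
  rw [mem_PMs] at hf
  rw [← card_neighborFinset_eq_degree]
  exact Finset.card_pos.mpr ⟨f v, (mem_neighborFinset _ _ _).mpr (hf.2 v)⟩

end Defs

/-- The complement of a vertex pair, as a set. -/
def cset (v u : V) : Set V := {v, u}ᶜ

instance (v u : V) : DecidablePred (· ∈ cset v u) := fun w =>
  decidable_of_iff (¬(w = v ∨ w = u)) (by simp [cset])

omit [Fintype V] [DecidableEq V] in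
lemma mem_cset {v u w : V} : w ∈ cset v u ↔ w ≠ v ∧ w ≠ u := by
  simp [cset]

instance (G : SimpleGraph V) [DecidableRel G.Adj] (s : Set V) :
    DecidableRel (G.induce s).Adj := fun a b =>
  inferInstanceAs (Decidable (G.Adj ↑a ↑b))

section Fiber

variable (G : SimpleGraph V) [DecidableRel G.Adj]

lemma pm_maps {f : V → V} (hf : f ∈ PMs G) {v u : V} (hfv : f v = u)
    {w : V} (hw : w ∈ cset v u) : f w ∈ cset v u := by
  rw [mem_PMs] at hf
  rw [mem_cset] at hw ⊢
  constructor
  · intro h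
    exact hw.2 (by rw [← hfv, ← h, hf.1 w])
  · intro h
    apply hw.1
    rw [← hf.1 v, hfv, ← h, hf.1 w]

/-- Restriction of a matching function to the complement of `{v, u}`. -/
def restrictFun (f : V → V) (v u : V) : ↥(cset v u) → ↥(cset v u) := fun x =>
  if h : f ↑x ∈ cset v u then ⟨f ↑x, h⟩ else x

/-- Extension of a matching function on the complement of `{v, u}` by the
edge `vu`. -/
def extendFun (v u : V) (g : ↥(cset v u) → ↥(cset v u)) : V → V := fun w =>
  if h : w ∈ cset v u then ↑(g ⟨w, h⟩) else if w = v then u else v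

lemma card_fiber (v u : V) (hadj : G.Adj v u) :
    ((PMs G).filter (fun f => f v = u)).card
      = (PMs (G.induce (cset v u))).card := by
  have hvu : v ≠ u := G.ne_of_adj hadj
  apply Finset.card_bij' (fun f _ => restrictFun f v u) (fun g _ => extendFun v u g)
  · -- restrict maps into PMs of the minor
    intro f hf
    rw [Finset.mem_filter] at hf
    obtain ⟨hfPM, hfv⟩ := hf
    have hmaps := fun {w} hw => pm_maps G hfPM hfv (w := w) hw
    have hfinv := ((mem_PMs G).mp hfPM).1
    have hfadj := ((mem_PMs G).mp hfPM).2
    rw [mem_PMs]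
    constructor
    · intro x
      have h1 : f ↑x ∈ cset v u := hmaps x.2
      have h2 : restrictFun f v u x = ⟨f ↑x, h1⟩ := dif_pos h1
      rw [h2]
      have h3 : f (f ↑x) ∈ cset v u := hmaps h1
      have h4 : restrictFun f v u ⟨f ↑x, h1⟩ = ⟨f (f ↑x), h3⟩ := dif_pos h3
      rw [h4]
      exact Subtype.ext (hfinv ↑x)
    · intro x
      have h1 : f ↑x ∈ cset v u := hmaps x.2
      have h2 : restrictFun f v u x = ⟨f ↑x, h1⟩ := dif_pos h1
      rw [h2]
      exact hfadj ↑x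
  · -- extend maps into the fiber
    intro g hg
    rw [mem_PMs] at hg
    have hvmem : v ∉ cset v u := by rw [mem_cset]; tauto
    have humem : u ∉ cset v u := by rw [mem_cset]; tauto
    have hev : extendFun v u g v = u := by
      rw [extendFun, dif_neg hvmem, if_pos rfl]
    have heu : extendFun v u g u = v := by
      rw [extendFun, dif_neg humem, if_neg (Ne.symm hvu)]
    rw [Finset.mem_filter, mem_PMs]
    refine ⟨⟨?_, ?_⟩, hev⟩
    · intro x
      by_cases hx : x ∈ cset v u
      · have h1 : extendFun v u g x = ↑(g ⟨x, hx⟩) := dif_pos hx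
        rw [h1]
        have h2 : (↑(g ⟨x, hx⟩) : V) ∈ cset v u := (g ⟨x, hx⟩).2
        rw [extendFun, dif_pos h2]
        have := congrArg Subtype.val (hg.1 ⟨x, hx⟩)
        simpa using this
      · rcases (by rw [mem_cset] at hx; tauto : x = v ∨ x = u) with rfl | rfl
        · rw [hev, heu]
        · rw [heu, hev]
    · intro w
      by_cases hw : w ∈ cset v u
      · rw [extendFun, dif_pos hw]
        exact hg.2 ⟨w, hw⟩
      · rcases (by rw [mem_cset] at hw; tauto : w = v ∨ w = u) with rfl | rfl
        · rw [hev]; exact hadj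
        · rw [heu]; exact hadj.symm
  · -- left inverse
    intro f hf
    rw [Finset.mem_filter] at hf
    obtain ⟨hfPM, hfv⟩ := hf
    have hmaps := fun {w} hw => pm_maps G hfPM hfv (w := w) hw
    have hfinv := ((mem_PMs G).mp hfPM).1
    funext w
    by_cases hw : w ∈ cset v u
    · rw [extendFun, dif_pos hw]
      have h1 : f w ∈ cset v u := hmaps hw
      have h2 : restrictFun f v u ⟨w, hw⟩ = ⟨f w, h1⟩ := dif_pos h1
      rw [h2]
    · rcases (by rw [mem_cset] at hw; tauto : w = v ∨ w = u) with rfl | rfl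
      · rw [extendFun, dif_neg hw, if_pos rfl, hfv]
      · rw [extendFun, dif_neg hw, if_neg (Ne.symm hvu)]
        rw [← hfv, hfinv]
  · -- right inverse
    intro g _
    funext x
    have hx : (↑x : V) ∈ cset v u := x.2
    have h1 : extendFun v u g ↑x = ↑(g x) := by
      rw [extendFun, dif_pos hx]
    have h2 : (↑(g x) : V) ∈ cset v u := (g x).2
    apply Subtype.ext
    rw [restrictFun, h1]
    rw [dif_pos h2]

end Fiber

section Degree

variable (G : SimpleGraph V) [DecidableRel G.Adj]

lemma degree_induce (s : Set V) [DecidablePred (· ∈ s)] (x : ↥s) :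
    (G.induce s).degree x = ((G.neighborFinset ↑x).filter (· ∈ s)).card := by
  rw [← card_neighborFinset_eq_degree]
  apply Finset.card_bij (fun (y : ↥s) _ => (↑y : V))
  · intro y hy
    rw [mem_neighborFinset] at hy
    rw [Finset.mem_filter, mem_neighborFinset]
    exact ⟨hy, y.2⟩
  · intro a ha b hb hab
    exact Subtype.ext hab
  · intro w hw
    rw [Finset.mem_filter, mem_neighborFinset] at hw
    exact ⟨⟨w, hw.2⟩, by rw [mem_neighborFinset]; exact hw.1, rfl⟩

lemma degree_induce_cset (v u : V) (w : V) (hw : w ∈ cset v u) :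
    (G.induce (cset v u)).degree ⟨w, hw⟩
        + (G.neighborFinset w ∩ {v, u}).card = G.degree w := by
  rw [degree_induce]
  have h1 : (G.neighborFinset w ∩ {v, u})
      = (G.neighborFinset w).filter (fun y => ¬ (y ∈ cset v u)) := by
    ext y
    simp only [Finset.mem_inter, Finset.mem_filter, Finset.mem_insert,
      Finset.mem_singleton, mem_cset]
    tauto
  rw [h1, ← card_neighborFinset_eq_degree]
  exact Finset.card_filter_add_card_filter_not _

end Degree


section Count

variable (G : SimpleGraph V) [DecidableRel G.Adj]

omit [Fintype V] in
lemma card_pair_inter (N : Finset V) (a b : V) (hab : a ≠ b) :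
    (N ∩ {a, b}).card
      = (if a ∈ N then 1 else 0) + (if b ∈ N then 1 else 0) := by
  have h1 : N ∩ {a, b} = ({a, b} : Finset V).filter (· ∈ N) := by
    rw [Finset.filter_mem_eq_inter, Finset.inter_comm]
  rw [h1]
  rw [show ({a, b} : Finset V) = insert a {b} from rfl, Finset.filter_insert,
    Finset.filter_singleton]
  by_cases ha : a ∈ N <;> by_cases hb : b ∈ N <;>
    simp [ha, hb, Finset.card_insert_of_notMem, Finset.mem_singleton, hab]

lemma count_delta {f : V → V} (hf : f ∈ PMs G) (w : V) :
    (∑ v ∈ Finset.univ.filter (fun v => v ≠ w ∧ v ≠ f w),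
        (G.neighborFinset w ∩ {v, f v}).card) + 2 = 2 * G.degree w := by
  rw [mem_PMs] at hf
  set N := G.neighborFinset w with hN
  set A := Finset.univ.filter (fun v => v ≠ w ∧ v ≠ f w) with hA
  have hvfv : ∀ v : V, v ≠ f v := fun v => (hf.2 v).ne
  have hsplit : ∀ v ∈ A, (N ∩ {v, f v}).card
      = (if v ∈ N then 1 else 0) + (if f v ∈ N then 1 else 0) :=
    fun v _ => card_pair_inter N v (f v) (hvfv v)
  rw [Finset.sum_congr rfl hsplit, Finset.sum_add_distrib]
  have hwN : w ∉ N := by rw [hN, mem_neighborFinset]; exact G.irrefl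
  have hfwN : f w ∈ N := by rw [hN, mem_neighborFinset]; exact hf.2 w
  have hset : A.filter (· ∈ N) = N.erase (f w) := by
    ext v
    rw [hA]
    simp only [Finset.mem_filter, Finset.mem_univ, true_and, Finset.mem_erase]
    constructor
    · tauto
    · rintro ⟨h1, h2⟩
      exact ⟨⟨fun hvw => hwN (hvw ▸ h2), h1⟩, h2⟩
  have hS1 : ∑ v ∈ A, (if v ∈ N then 1 else 0) = (N.erase (f w)).card := by
    rw [← Finset.sum_filter, hset, Finset.card_eq_sum_ones]
  have hAA : ∀ v ∈ A, f v ∈ A := by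
    intro v hv
    rw [hA, Finset.mem_filter] at hv ⊢
    refine ⟨Finset.mem_univ _, ?_, ?_⟩
    · intro h
      exact hv.2.2 (by rw [← hf.1 v, h])
    · intro h
      exact hv.2.1 (by rw [← hf.1 v, h, hf.1 w])
  have hS2 : ∑ v ∈ A, (if f v ∈ N then 1 else 0)
      = ∑ v ∈ A, (if v ∈ N then 1 else 0) := by
    apply Finset.sum_bij' (fun v _ => f v) (fun v _ => f v) hAA hAA
      (fun v _ => hf.1 v) (fun v _ => hf.1 v)
    intro v _
    rfl
  rw [hS1, hS2, hS1]
  have hcard : (N.erase (f w)).card + 1 = N.card :=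
    Finset.card_erase_add_one hfwN
  have hdeg : N.card = G.degree w := card_neighborFinset_eq_degree G w
  omega

end Count

section EquivPM

variable (G : SimpleGraph V) [DecidableRel G.Adj]

/-- The subgraph associated to a matching function. -/
def funSubgraph (f : V → V) (hf : pmPred G f) : G.Subgraph where
  verts := Set.univ
  Adj a b := f a = b
  adj_sub h := h ▸ hf.2 _
  edge_vert _ := Set.mem_univ _
  symm := ⟨fun a b h => by
    show f b = a
    rw [← h, hf.1]⟩

lemma funSubgraph_isPM (f : V → V) (hf : pmPred G f) :
    (funSubgraph G f hf).IsPerfectMatching := by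
  constructor
  · intro v _
    exact ⟨f v, rfl, fun y hy => (show f v = y from hy).symm⟩
  · intro v
    exact Set.mem_univ v

/-- Perfect matchings as subgraphs are equivalent to matching functions. -/
noncomputable def pmEquiv :
    {M : G.Subgraph // M.IsPerfectMatching} ≃ {f : V → V // pmPred G f} where
  toFun M := by
    refine ⟨fun v => (M.2.1 (M.2.2 v)).choose, ?_, ?_⟩
    · intro x
      have h1 := (M.2.1 (M.2.2 x)).choose_spec
      have h2 := (M.2.1 (M.2.2 ((M.2.1 (M.2.2 x)).choose))).choose_spec
      exact (h2.2 x (M.1.adj_symm h1.1)).symm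
    · intro v
      exact M.1.adj_sub (M.2.1 (M.2.2 v)).choose_spec.1
  invFun f := ⟨funSubgraph G f.1 f.2, funSubgraph_isPM G f.1 f.2⟩
  left_inv := by
    rintro ⟨M, hM⟩
    apply Subtype.ext
    apply SimpleGraph.Subgraph.ext
    · exact (Set.eq_univ_of_forall hM.2).symm
    · funext a b
      apply propext
      constructor
      · rintro (h : (hM.1 (hM.2 a)).choose = b)
        exact h ▸ (hM.1 (hM.2 a)).choose_spec.1
      · intro h
        exact ((hM.1 (hM.2 a)).choose_spec.2 b h).symm
  right_inv := by
    rintro ⟨f, hf⟩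
    apply Subtype.ext
    funext v
    have h := ((funSubgraph_isPM G f hf).1
      ((funSubgraph_isPM G f hf).2 v)).choose_spec.1
    exact Eq.symm h

lemma ncard_PM :
    ({M : G.Subgraph | M.IsPerfectMatching} : Set G.Subgraph).ncard
      = (PMs G).card := by
  rw [← Nat.card_coe_set_eq]
  have h1 : Nat.card ({M : G.Subgraph | M.IsPerfectMatching} : Set G.Subgraph)
      = Nat.card {f : V → V // pmPred G f} :=
    Nat.card_congr (pmEquiv G)
  rw [h1, Nat.card_eq_fintype_card, Fintype.card_subtype]
  rfl

end EquivPM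

/-- The per-degree factor `(d!)^(1/d)`, with the convention `0` for `d = 0`. -/
noncomputable def gd (d : ℕ) : ℝ :=
  if d = 0 then 0 else (d.factorial : ℝ) ^ ((1 : ℝ) / d)

lemma gd_nonneg (d : ℕ) : 0 ≤ gd d := by
  rw [gd]
  split
  · exact le_rfl
  · positivity

lemma gd_eq_exp {d : ℕ} (hd : d ≠ 0) : gd d = Real.exp (aF d) := by
  have hpos : (0 : ℝ) < (d.factorial : ℝ) := by
    exact_mod_cast d.factorial_pos
  rw [gd, if_neg hd, Real.rpow_def_of_pos hpos, aF]
  congr 1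
  ring


universe u

theorem key : ∀ (n : ℕ) (W : Type u) [Fintype W] [DecidableEq W]
    (G : SimpleGraph W) [DecidableRel G.Adj], Fintype.card W = n →
    ((PMs G).card : ℝ) ^ 2 ≤ ∏ v : W, gd (G.degree v) := by
  intro n
  induction n using Nat.strong_induction_on with
  | _ n IH =>
    intro W _ _ G _ hn
    set m := (PMs G).card with hm
    rcases Nat.eq_zero_or_pos m with hm0 | hmpos
    · rw [hm0]
      norm_num
      exact Finset.prod_nonneg (fun v _ => gd_nonneg _)
    have hne : (PMs G).Nonempty := Finset.card_pos.mp hmpos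
    have hdeg : ∀ v, 1 ≤ G.degree v := degree_pos_of_PMs_nonempty G hne
    rcases Nat.eq_zero_or_pos n with hn0 | hnpos
    · -- empty vertex type
      have hempty : IsEmpty W := Fintype.card_eq_zero_iff.mp (by omega)
      have huniv : (Finset.univ : Finset W) = ∅ := Finset.univ_eq_empty
      have hone : Fintype.card (W → W) = 1 := by
        rw [Fintype.card_fun, hn, hn0]
        rfl
      have hle : m ≤ 1 := by
        rw [hm, ← hone]
        exact Finset.card_le_univ _ |>.trans (le_of_eq (Finset.card_univ))
      have hm1 : m = 1 := le_antisymm hle hmpos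
      rw [hm1, huniv]
      norm_num
    -- now m ≥ 1 and n ≥ 1; get n ≥ 2
    obtain ⟨f₀, hf₀⟩ := hne
    have hf₀' := (mem_PMs G).mp hf₀
    obtain ⟨v₀⟩ : Nonempty W := Fintype.card_pos_iff.mp (by omega)
    have hn2 : 2 ≤ n := by
      rw [← hn]
      exact Fintype.one_lt_card_iff_nontrivial.mpr ⟨⟨v₀, f₀ v₀, (hf₀'.2 v₀).ne⟩⟩
    -- abbreviations
    set d : W → ℕ := fun v => G.degree v with hd
    set c : W → W → ℕ :=
      fun v u => ((PMs G).filter (fun f => f v = u)).card with hc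
    set sW : W → ℝ := fun w => aF (d w) - aF (d w - 1) with hsW
    -- Step A: Jensen at each vertex
    have stepA : ∀ v : W, (m : ℝ) * Real.log m
        ≤ m * Real.log (d v)
          + ∑ u ∈ G.neighborFinset v, ((c v u : ℝ) * Real.log (c v u)) := by
      intro v
      have hfib : m = ∑ u ∈ G.neighborFinset v, c v u :=
        Finset.card_eq_sum_card_fiberwise
          (fun f hf => (mem_neighborFinset _ _ _).mpr (((mem_PMs G).mp hf).2 v))
      have hcard : (G.neighborFinset v).card = d v :=
        card_neighborFinset_eq_degree G v
      have hj := jensen (G.neighborFinset v) (c v)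
      rw [← hfib, hcard] at hj
      exact hj
    -- Step B: fiberwise rewriting
    have stepB : ∀ v : W,
        ∑ u ∈ G.neighborFinset v, ((c v u : ℝ) * Real.log (c v u))
          = ∑ f ∈ PMs G, Real.log (c v (f v)) := by
      intro v
      rw [← Finset.sum_fiberwise_of_maps_to (g := fun f => f v)
        (fun f hf => (mem_neighborFinset _ _ _).mpr (((mem_PMs G).mp hf).2 v))
        (fun f => Real.log (c v (f v)))]
      apply Finset.sum_congr rfl
      intro u _
      have hcong : ∀ f ∈ (PMs G).filter (fun f => f v = u),
          Real.log (c v (f v)) = Real.log (c v u) := fun f hf => by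
        rw [(Finset.mem_filter.mp hf).2]
      rw [Finset.sum_congr rfl hcong, Finset.sum_const, nsmul_eq_mul]
    -- Step C: minor bound for each (v, f)
    have stepC : ∀ v : W, ∀ f ∈ PMs G, 2 * Real.log (c v (f v))
        ≤ ∑ w ∈ Finset.univ.filter (fun w => w ≠ v ∧ w ≠ f v),
            (aF (d w)
              - ((G.neighborFinset w ∩ {v, f v}).card : ℝ) * sW w) := by
      intro v f hf
      have hfmem := (mem_PMs G).mp hf
      have hadj : G.Adj v (f v) := hfmem.2 v
      have hvu : v ≠ f v := hadj.ne
      have hcf : c v (f v) = (PMs (G.induce (cset v (f v)))).card :=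
        card_fiber G v (f v) hadj
      have hpos : 1 ≤ c v (f v) :=
        Finset.card_pos.mpr ⟨f, Finset.mem_filter.mpr ⟨hf, rfl⟩⟩
      have hposm : 1 ≤ (PMs (G.induce (cset v (f v)))).card := hcf ▸ hpos
      have hneM : (PMs (G.induce (cset v (f v)))).Nonempty :=
        Finset.card_pos.mp hposm
      have hdegm : ∀ x : ↥(cset v (f v)),
          1 ≤ (G.induce (cset v (f v))).degree x :=
        degree_pos_of_PMs_nonempty _ hneM
      -- cardinality of the minor vertex set
      have htofin : (cset v (f v)).toFinset = ({v, f v} : Finset W)ᶜ := by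
        ext w
        rw [Set.mem_toFinset, mem_cset]
        simp
      have hcardc : Fintype.card ↥(cset v (f v)) = n - 2 := by
        rw [← Set.toFinset_card, htofin, Finset.card_compl,
          Finset.card_pair hvu, hn]
      have hIH := IH (n - 2) (by omega) ↥(cset v (f v))
        (G.induce (cset v (f v))) hcardc
      -- product to exp-sum
      have hprod : ∏ x : ↥(cset v (f v)), gd ((G.induce (cset v (f v))).degree x)
          = Real.exp (∑ x : ↥(cset v (f v)),
              aF ((G.induce (cset v (f v))).degree x)) := by
        rw [Real.exp_sum]
        exact Finset.prod_congr rfl fun x _ => gd_eq_exp (by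
          have := hdegm x; omega)
      rw [hprod] at hIH
      have hxpos : (0 : ℝ) < ((PMs (G.induce (cset v (f v)))).card : ℝ) ^ 2 := by
        have : (0:ℝ) < ((PMs (G.induce (cset v (f v)))).card : ℝ) := by
          exact_mod_cast hposm
        positivity
      have h2log := (Real.log_le_iff_le_exp hxpos).mpr hIH
      rw [Real.log_pow] at h2log
      -- identify minor degrees
      have hdegeq : ∀ x : ↥(cset v (f v)),
          (G.induce (cset v (f v))).degree x
            = d ↑x - (G.neighborFinset ↑x ∩ {v, f v}).card := by
        intro x
        have h' : (G.induce (cset v (f v))).degree x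
            + (G.neighborFinset (↑x) ∩ {v, f v}).card = d ↑x :=
          degree_induce_cset G v (f v) ↑x x.2
        omega
      -- sum over subtype to sum over filter
      have hmemiff : ∀ w : W,
          w ∈ Finset.univ.filter (fun w => w ≠ v ∧ w ≠ f v)
            ↔ w ∈ cset v (f v) := by
        intro w
        rw [Finset.mem_filter, mem_cset]
        simp
      have hsum : ∑ x : ↥(cset v (f v)), aF ((G.induce (cset v (f v))).degree x)
          = ∑ w ∈ Finset.univ.filter (fun w => w ≠ v ∧ w ≠ f v),
              aF (d w - (G.neighborFinset w ∩ {v, f v}).card) := by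
        rw [Finset.sum_subtype _ hmemiff
          (fun w => aF (d w - (G.neighborFinset w ∩ {v, f v}).card))]
        exact Finset.sum_congr rfl fun x _ => by rw [hdegeq x]
      -- pointwise tangent bound
      have hptw : ∀ w ∈ Finset.univ.filter (fun w => w ≠ v ∧ w ≠ f v),
          aF (d w - (G.neighborFinset w ∩ {v, f v}).card)
            ≤ aF (d w) - ((G.neighborFinset w ∩ {v, f v}).card : ℝ) * sW w := by
        intro w hw
        set δ := (G.neighborFinset w ∩ {v, f v}).card with hδ
        have hδ2 : δ ≤ 2 := by
          calc δ ≤ ({v, f v} : Finset W).card :=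
                Finset.card_le_card Finset.inter_subset_right
            _ = 2 := Finset.card_pair hvu
        have hwc : w ∈ cset v (f v) := (hmemiff w).mp hw
        have hd1 : 1 ≤ d w - δ := by
          have h1 : 1 ≤ (G.induce (cset v (f v))).degree ⟨w, hwc⟩ := hdegm ⟨w, hwc⟩
          have h2 : (G.induce (cset v (f v))).degree ⟨w, hwc⟩ = d w - δ :=
            hdegeq ⟨w, hwc⟩
          omega
        have ht := aF_tangent (d' := d w - δ) (d := d w) hd1 (by omega) (by omega)
        have hcast : ((d w : ℝ) - ((d w - δ : ℕ) : ℝ)) = (δ : ℝ) := by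
          have hδd : δ ≤ d w := by omega
          push_cast [Nat.cast_sub hδd]
          ring
        rw [hcast] at ht
        exact ht
      calc 2 * Real.log (c v (f v))
          = (2 : ℕ) * Real.log ((PMs (G.induce (cset v (f v)))).card : ℝ) := by
            rw [hcf]; norm_num
        _ ≤ ∑ x : ↥(cset v (f v)), aF ((G.induce (cset v (f v))).degree x) :=
            h2log
        _ = ∑ w ∈ Finset.univ.filter (fun w => w ≠ v ∧ w ≠ f v),
              aF (d w - (G.neighborFinset w ∩ {v, f v}).card) := hsum
        _ ≤ _ := Finset.sum_le_sum hptw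
    -- Step D: swap the two vertex sums, for fixed f
    have stepD : ∀ f ∈ PMs G,
        (∑ v : W, ∑ w ∈ Finset.univ.filter (fun w => w ≠ v ∧ w ≠ f v),
            (aF (d w) - ((G.neighborFinset w ∩ {v, f v}).card : ℝ) * sW w))
          = ∑ w : W, ∑ v ∈ Finset.univ.filter (fun v => v ≠ w ∧ v ≠ f w),
            (aF (d w) - ((G.neighborFinset w ∩ {v, f v}).card : ℝ) * sW w) := by
      intro f hf
      have hinv := ((mem_PMs G).mp hf).1
      apply Finset.sum_comm'
      intro v w
      simp only [Finset.mem_filter, Finset.mem_univ, true_and, and_true]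
      constructor
      · rintro ⟨h1, h2⟩
        exact ⟨Ne.symm h1, fun hv => h2 (by rw [hv, hinv w])⟩
      · rintro ⟨h1, h2⟩
        exact ⟨Ne.symm h1, fun hw => h2 (by rw [hw, hinv v])⟩
    -- Step E: evaluate the inner sum for fixed f and w
    have stepE : ∀ f ∈ PMs G, ∀ w : W,
        (∑ v ∈ Finset.univ.filter (fun v => v ≠ w ∧ v ≠ f w),
            (aF (d w) - ((G.neighborFinset w ∩ {v, f v}).card : ℝ) * sW w))
          = ((n : ℝ) - 2) * aF (d w) - (2 * (d w : ℝ) - 2) * sW w := by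
      intro f hf w
      have hadjw : G.Adj w (f w) := ((mem_PMs G).mp hf).2 w
      have hcardA : (Finset.univ.filter (fun v => v ≠ w ∧ v ≠ f w)).card
          = n - 2 := by
        have hAc : Finset.univ.filter (fun v => v ≠ w ∧ v ≠ f w)
            = ({w, f w} : Finset W)ᶜ := by
          ext x
          simp [not_or]
        rw [hAc, Finset.card_compl, Finset.card_pair hadjw.ne, hn]
      have hsum := count_delta G hf w
      have hδℝ : ∑ v ∈ Finset.univ.filter (fun v => v ≠ w ∧ v ≠ f w),
          ((G.neighborFinset w ∩ {v, f v}).card : ℝ) = 2 * (d w : ℝ) - 2 := by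
        have h1 : ((∑ v ∈ Finset.univ.filter (fun v => v ≠ w ∧ v ≠ f w),
            (G.neighborFinset w ∩ {v, f v}).card : ℕ) : ℝ) + 2
            = 2 * ((G.degree w : ℕ) : ℝ) := by exact_mod_cast hsum
        push_cast at h1 ⊢
        linarith
      rw [Finset.sum_sub_distrib, ← Finset.sum_mul, hδℝ, Finset.sum_const,
        hcardA, nsmul_eq_mul, Nat.cast_sub hn2]
      norm_num
    -- assemble the double sum
    have hT : (∑ v : W, ∑ f ∈ PMs G,
          (1 / 2 : ℝ) * ∑ w ∈ Finset.univ.filter (fun w => w ≠ v ∧ w ≠ f v),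
            (aF (d w) - ((G.neighborFinset w ∩ {v, f v}).card : ℝ) * sW w))
        = 1 / 2 * (m : ℝ) * ∑ w : W,
            (((n : ℝ) - 2) * aF (d w) - (2 * (d w : ℝ) - 2) * sW w) := by
      rw [Finset.sum_comm]
      have hstep : ∀ f ∈ PMs G,
          (∑ v : W, (1 / 2 : ℝ) *
              ∑ w ∈ Finset.univ.filter (fun w => w ≠ v ∧ w ≠ f v),
              (aF (d w) - ((G.neighborFinset w ∩ {v, f v}).card : ℝ) * sW w))
            = 1 / 2 * ∑ w : W,
              (((n : ℝ) - 2) * aF (d w) - (2 * (d w : ℝ) - 2) * sW w) := by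
        intro f hf
        rw [← Finset.mul_sum, stepD f hf]
        congr 1
        exact Finset.sum_congr rfl fun w _ => stepE f hf w
      rw [Finset.sum_congr rfl hstep, Finset.sum_const, nsmul_eq_mul, ← hm]
      ring
    -- per-vertex exact identity
    have hper : ∀ w : W, Real.log (d w)
        + 1 / 2 * (((n : ℝ) - 2) * aF (d w) - (2 * (d w : ℝ) - 2) * sW w)
        = (n : ℝ) / 2 * aF (d w) := by
      intro w
      have hid := aF_identity (hdeg w)
      rw [hsW]
      rw [hid]
      ring
    -- the total inequality
    have total : (n : ℝ) * ((m : ℝ) * Real.log m)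
        ≤ (m : ℝ) * ((n : ℝ) / 2 * ∑ w : W, aF (d w)) := by
      calc (n : ℝ) * ((m : ℝ) * Real.log m)
          = ∑ _v : W, (m : ℝ) * Real.log m := by
            rw [Finset.sum_const, Finset.card_univ, hn, nsmul_eq_mul]
        _ ≤ ∑ v : W, ((m : ℝ) * Real.log (d v)
              + ∑ f ∈ PMs G, (1 / 2 : ℝ) *
                ∑ w ∈ Finset.univ.filter (fun w => w ≠ v ∧ w ≠ f v),
                (aF (d w) - ((G.neighborFinset w ∩ {v, f v}).card : ℝ) * sW w)) := by
            apply Finset.sum_le_sum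
            intro v _
            have h1 := stepA v
            rw [stepB v] at h1
            have h2 : (∑ f ∈ PMs G, Real.log (c v (f v)))
                ≤ ∑ f ∈ PMs G, (1 / 2 : ℝ) *
                  ∑ w ∈ Finset.univ.filter (fun w => w ≠ v ∧ w ≠ f v),
                  (aF (d w) - ((G.neighborFinset w ∩ {v, f v}).card : ℝ) * sW w) := by
              apply Finset.sum_le_sum
              intro f hf
              have h3 := stepC v f hf
              linarith
            linarith
        _ = ∑ v : W, (m : ℝ) * Real.log (d v)
              + 1 / 2 * (m : ℝ) * ∑ w : W,
                (((n : ℝ) - 2) * aF (d w) - (2 * (d w : ℝ) - 2) * sW w) := by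
            rw [Finset.sum_add_distrib, hT]
        _ = (m : ℝ) * ∑ w : W, (Real.log (d w)
              + 1 / 2 * (((n : ℝ) - 2) * aF (d w) - (2 * (d w : ℝ) - 2) * sW w)) := by
            rw [Finset.sum_add_distrib, ← Finset.mul_sum, ← Finset.mul_sum]
            ring
        _ = (m : ℝ) * ∑ w : W, (n : ℝ) / 2 * aF (d w) := by
            rw [Finset.sum_congr rfl fun w _ => hper w]
        _ = (m : ℝ) * ((n : ℝ) / 2 * ∑ w : W, aF (d w)) := by
            rw [← Finset.mul_sum]
    -- divide by n * m
    have hnm : (0 : ℝ) < (n : ℝ) * (m : ℝ) := by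
      have h1 : (0 : ℝ) < (n : ℝ) := by exact_mod_cast hnpos
      have h2 : (0 : ℝ) < (m : ℝ) := by exact_mod_cast hmpos
      positivity
    have hlogm : Real.log m ≤ 1 / 2 * ∑ w : W, aF (d w) := by
      have h1 : (n : ℝ) * (m : ℝ) * Real.log m
          ≤ (n : ℝ) * (m : ℝ) * (1 / 2 * ∑ w : W, aF (d w)) := by
        nlinarith [total]
      exact le_of_mul_le_mul_left (by linarith) hnm
    -- conclude
    have hmpos' : (0 : ℝ) < (m : ℝ) := by exact_mod_cast hmpos
    have hfin : ((m : ℝ)) ^ 2 ≤ Real.exp (∑ w : W, aF (d w)) := by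
      have h1 : Real.log ((m : ℝ) ^ 2) = 2 * Real.log (m : ℝ) := by
        rw [Real.log_pow]
        norm_num
      rw [← Real.exp_log (show (0 : ℝ) < (m : ℝ) ^ 2 by positivity), h1]
      apply Real.exp_le_exp.mpr
      linarith
    calc ((m : ℝ)) ^ 2 ≤ Real.exp (∑ w : W, aF (d w)) := hfin
      _ = ∏ v : W, gd (G.degree v) := by
          rw [Real.exp_sum]
          exact Finset.prod_congr rfl fun v _ =>
            (gd_eq_exp (Nat.one_le_iff_ne_zero.mp (hdeg v))).symm

end KL

/-- Upper bound on the number of perfect matchings of a graph with an even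
number of vertices, in terms of the degrees of its vertices; a factor with
`deg v = 0` is interpreted as `0`. -/
theorem perfmat_le (V : Type*) [Fintype V] [DecidableEq V]
    (G : SimpleGraph V) [DecidableRel G.Adj] (heven : Even (Fintype.card V)) :
    (({M : G.Subgraph | M.IsPerfectMatching} : Set G.Subgraph).ncard : ℝ) ≤
      ∏ v : V, (if G.degree v = 0 then (0 : ℝ) else
        ((G.degree v).factorial : ℝ) ^ ((1 : ℝ) / (2 * (G.degree v : ℝ)))) := by
  classical
  rw [KL.ncard_PM]
  by_cases hzero : ∃ v, G.degree v = 0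
  · obtain ⟨v, hv⟩ := hzero
    have hempty : KL.PMs G = ∅ := by
      rw [← Finset.not_nonempty_iff_eq_empty]
      intro h
      have := KL.degree_pos_of_PMs_nonempty G h v
      omega
    rw [hempty]
    rw [Finset.prod_eq_zero (Finset.mem_univ v) (by rw [if_pos hv])]
    norm_num
  · push_neg at hzero
    have hkey := KL.key (Fintype.card V) V G rfl
    set P : ℝ := ∏ v : V, (if G.degree v = 0 then (0 : ℝ) else
      ((G.degree v).factorial : ℝ) ^ ((1 : ℝ) / (2 * (G.degree v : ℝ)))) with hP
    have hPnn : 0 ≤ P := by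
      apply Finset.prod_nonneg
      intro v _
      split
      · exact le_rfl
      · positivity
    have hP2 : P ^ 2 = ∏ v : V, KL.gd (G.degree v) := by
      rw [hP, ← Finset.prod_pow]
      apply Finset.prod_congr rfl
      intro v _
      rw [if_neg (hzero v), KL.gd, if_neg (hzero v)]
      rw [← Real.rpow_natCast (((G.degree v).factorial : ℝ)
        ^ ((1 : ℝ) / (2 * (G.degree v : ℝ)))) 2,
        ← Real.rpow_mul (by positivity)]
      congr 1
      have hdv : ((G.degree v : ℝ)) ≠ 0 := by
        exact_mod_cast hzero v
      push_cast
      field_simp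
    rw [← hP2] at hkey
    have hsqrt := Real.sqrt_le_sqrt hkey
    rwa [Real.sqrt_sq (x := ((KL.PMs G).card : ℝ)) (Nat.cast_nonneg _), Real.sqrt_sq hPnn] at hsqrt
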